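/- arXiv:2303.13406 — 3 statements merged into one kernel-verified Lean document; each statement's English description precedes it below -/
import Mathlib

section
/- Simes' identity under independence: Let p₁,…,p_d be i.i.d. uniform on (0,1) and let p₍₁₎ ≤ … ≤ p₍d₎ be their order statistics. Then P(p₍ᵢ₎ > iα/d for all i = 1,…,d) = 1 − α for every α ∈ [0,1]. -/
open MeasureTheory Real ProbabilityTheory Finset

lemma simes_cycle_count (d s : ℕ) (hd : 0 < d) (hsd : s ≤ d) (c : ℕ → ℕ)
    (hper : ∀ n, c (n + d) = c n) (hsum : ∑ m ∈ range d, c m = s) :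
    ((range d).filter (fun r => ∀ i < d, (∑ m ∈ range (i+1), c (r + m)) ≤ i)).card = d - s := by
  set A : ℕ → ℤ := fun n => (n : ℤ) - ∑ m ∈ range n, (c m : ℤ) with hA
  -- window sums are constant
  have hwin : ∀ n, ∑ m ∈ range d, c (n + m) = s := by
    intro n
    induction n with
    | zero => simpa using hsum
    | succ n ih =>
      have h1 : ∑ m ∈ range (d+1), c (n + m) = c n + ∑ m ∈ range d, c (n + 1 + m) := by
        rw [Finset.sum_range_succ']
        simp [Nat.add_comm, Nat.add_assoc, Nat.add_left_comm]
      have h2 : ∑ m ∈ range (d+1), c (n + m) = (∑ m ∈ range d, c (n + m)) + c (n + d) := by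
        rw [Finset.sum_range_succ]
      have h3 : c (n + d) = c n := hper n
      omega
  have hshift : ∀ n, A (n + d) = A n + ((d : ℤ) - s) := by
    intro n
    have h1 : ∑ m ∈ range (n + d), (c m : ℤ)
        = (∑ m ∈ range n, (c m : ℤ)) + ∑ m ∈ range d, (c (n + m) : ℤ) := by
      rw [Finset.sum_range_add]
    have h2 : ∑ m ∈ range d, (c (n + m) : ℤ) = (s : ℤ) := by
      rw [← Nat.cast_sum]; exact_mod_cast congrArg (Nat.cast (R := ℤ)) (hwin n)
    simp only [hA]
    push_cast
    rw [h1, h2]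
    ring
  -- the filter condition in terms of A
  have hcond : ∀ r, (∀ i < d, (∑ m ∈ range (i+1), c (r + m)) ≤ i)
      ↔ (∀ i < d, A r < A (r + i + 1)) := by
    intro r
    have key : ∀ i : ℕ, ((∑ m ∈ range (i+1), c (r + m)) ≤ i ↔ A r < A (r + i + 1)) := by
      intro i
      have h1 : ∑ m ∈ range (r + (i+1)), (c m : ℤ)
          = (∑ m ∈ range r, (c m : ℤ)) + ∑ m ∈ range (i+1), (c (r + m) : ℤ) := by
        rw [Finset.sum_range_add]
      have h2 : (∑ m ∈ range (i+1), (c (r + m) : ℤ)) = ((∑ m ∈ range (i+1), c (r + m) : ℕ) : ℤ) := by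
        push_cast; rfl
      simp only [hA]
      constructor
      · intro h
        have h' : ((∑ m ∈ range (i+1), c (r + m) : ℕ) : ℤ) ≤ (i : ℤ) := by exact_mod_cast h
        have : r + i + 1 = r + (i + 1) := by ring
        rw [this, h1, h2]
        push_cast
        omega
      · intro h
        have : r + i + 1 = r + (i + 1) := by ring
        rw [this, h1, h2] at h
        push_cast at h
        omega
    exact ⟨fun h i hi => (key i).1 (h i hi), fun h i hi => (key i).2 (h i hi)⟩
  have hfe : (range d).filter (fun r => ∀ i < d, (∑ m ∈ range (i+1), c (r + m)) ≤ i)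
      = (range d).filter (fun r => ∀ i < d, A r < A (r + i + 1)) := by
    apply Finset.filter_congr
    intro r _
    simpa using hcond r
  rw [hfe]
  rcases eq_or_lt_of_le hsd with heq | hlt
  · -- s = d : no good rotations
    have : (range d).filter (fun r => ∀ i < d, A r < A (r + i + 1)) = ∅ := by
      rw [Finset.filter_eq_empty_iff]
      intro r _
      intro hgood
      have h1 := hgood (d - 1) (by omega)
      have h2 : r + (d - 1) + 1 = r + d := by omega
      rw [h2, hshift r] at h1
      omega
    rw [this]
    simp only [Finset.card_empty]
    omega
  · -- s < d
    set k : ℤ := (d : ℤ) - s with hk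
    have hkpos : 0 < k := by omega
    obtain ⟨t, ht, htmin⟩ : ∃ t, t < d ∧ ∀ n < d, A t ≤ A n := by
      obtain ⟨t, htmem, hmin⟩ := Finset.exists_min_image (range d) A ⟨0, by simpa using hd⟩
      exact ⟨t, Finset.mem_range.1 htmem, fun n hn => hmin n (Finset.mem_range.2 hn)⟩
    set m0 : ℤ := A t with hm0
    have hAd : ∀ v : ℤ, v < m0 + k → v < A d := by
      intro v hv
      have : A d = A 0 + k := by have := hshift 0; simpa using this
      have h0 : m0 ≤ A 0 := htmin 0 hd
      omega
    have hstep : ∀ n, A (n + 1) ≤ A n + 1 := by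
      intro n
      simp only [hA, Finset.sum_range_succ]
      push_cast
      have : (0 : ℤ) ≤ (c n : ℤ) := by positivity
      omega
    -- the "last position at level v" map
    set ρ : ℤ → ℕ := fun v => (((range d).filter (fun n => A n ≤ v)).max).getD 0 with hρ
    have hρspec : ∀ v : ℤ, m0 ≤ v →
        (ρ v < d ∧ A (ρ v) ≤ v ∧ ∀ n < d, A n ≤ v → n ≤ ρ v) := by
      intro v hv
      have hne : ((range d).filter (fun n => A n ≤ v)).Nonempty :=
        ⟨t, Finset.mem_filter.2 ⟨Finset.mem_range.2 ht, by rw [← hm0]; exact hv⟩⟩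
      have hmax : ρ v = ((range d).filter (fun n => A n ≤ v)).max' hne := by
        simp only [hρ]
        rw [← Finset.coe_max' hne]
        rfl
      have hmem := Finset.max'_mem _ hne
      rw [← hmax] at hmem
      rw [Finset.mem_filter, Finset.mem_range] at hmem
      refine ⟨hmem.1, hmem.2, ?_⟩
      intro n hn hAn
      have hmem2 : n ∈ (range d).filter (fun n => A n ≤ v) := by
        simp only [Finset.mem_filter, Finset.mem_range]
        exact ⟨hn, hAn⟩
      have := Finset.le_max' _ n hmem2
      rw [← hmax] at this
      exact this
    have claim1 : ∀ v : ℤ, m0 ≤ v → v < m0 + k →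
        A (ρ v) = v ∧ (∀ i < d, A (ρ v) < A (ρ v + i + 1)) := by
      intro v hv1 hv2
      obtain ⟨hrd, hrle, hrmax⟩ := hρspec v hv1
      have hAbove : ∀ n, ρ v < n → n < d → v < A n := by
        intro n h1 h2
        by_contra h
        push_neg at h
        have := hrmax n h2 h
        omega
      have hr1 : v < A (ρ v + 1) := by
        rcases lt_or_eq_of_le (Nat.succ_le_of_lt hrd) with h | h
        · exact hAbove _ (Nat.lt_succ_self _) h
        · rw [show ρ v + 1 = d from h]
          exact hAd v hv2
      have hAr : A (ρ v) = v := by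
        have := hstep (ρ v)
        omega
      refine ⟨hAr, ?_⟩
      intro i hi
      rcases lt_or_ge (ρ v + i + 1) d with h | h
      · rw [hAr]
        exact hAbove _ (by omega) h
      · have h2 : (ρ v + i + 1) - d < d := by omega
        have h3 : A (ρ v + i + 1) = A ((ρ v + i + 1) - d) + k := by
          have h5 := hshift ((ρ v + i + 1) - d)
          rw [Nat.sub_add_cancel (by omega)] at h5
          exact h5
        have h4 := htmin _ h2
        omega
    have claim2 : ∀ r, r < d → (∀ i < d, A r < A (r + i + 1)) →
        (m0 ≤ A r ∧ A r < m0 + k ∧ ρ (A r) = r) := by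
      intro r hrd hgood
      have h1 : m0 ≤ A r := htmin r hrd
      have h2 : A r < m0 + k := by
        rcases lt_trichotomy t r with h | h | h
        · have hi : t + d - r - 1 < d := by omega
          have heq : r + (t + d - r - 1) + 1 = t + d := by omega
          have h6 := hgood _ hi
          rw [heq] at h6
          have h7 := hshift t
          omega
        · subst h
          omega
        · have hi : t - r - 1 < d := by omega
          have heq : r + (t - r - 1) + 1 = t := by omega
          have h6 := hgood _ hi
          rw [heq] at h6
          omega
      refine ⟨h1, h2, ?_⟩
      obtain ⟨hlt, hle, hmaxx⟩ := hρspec (A r) h1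
      have hub : r ≤ ρ (A r) := hmaxx r hrd le_rfl
      have hlb : ρ (A r) ≤ r := by
        by_contra hcon
        push_neg at hcon
        have heq : r + (ρ (A r) - r - 1) + 1 = ρ (A r) := by omega
        have := hgood (ρ (A r) - r - 1) (by omega)
        rw [heq] at this
        omega
      omega
    have himg : (range d).filter (fun r => ∀ i < d, A r < A (r + i + 1))
        = (Finset.Ico m0 (m0 + k)).image ρ := by
      ext r
      simp only [Finset.mem_filter, Finset.mem_range, Finset.mem_image, Finset.mem_Ico]
      constructor
      · rintro ⟨hrd, hgood⟩
        obtain ⟨h1, h2, h3⟩ := claim2 r hrd hgood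
        exact ⟨A r, ⟨h1, h2⟩, h3⟩
      · rintro ⟨v, ⟨hv1, hv2⟩, rfl⟩
        obtain ⟨hrd, _, _⟩ := hρspec v hv1
        obtain ⟨hAr, hgood⟩ := claim1 v hv1 hv2
        exact ⟨hrd, hgood⟩
    rw [himg, Finset.card_image_of_injOn]
    · rw [Int.card_Ico]
      omega
    · intro v hv v' hv' hvv
      rw [Finset.mem_coe, Finset.mem_Ico] at hv hv'
      have e1 := (claim1 v hv.1 hv.2).1
      have e2 := (claim1 v' hv'.1 hv'.2).1
      rw [← e1, ← e2, hvv]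

def simesShift (d r : ℕ) : Fin (d+1) → Fin (d+1) := fun m =>
  if h : (m : ℕ) < d then ⟨((m : ℕ) + (d - r)) % d, Nat.lt_succ_of_lt (Nat.mod_lt _ (by omega))⟩
  else m

def simesGood (d : ℕ) (v : Fin d → Fin (d+1)) : Prop :=
  ∀ i : Fin d, ((Finset.univ.filter fun j => (v j : ℕ) ≤ (i : ℕ)).card ≤ (i : ℕ))

instance (d : ℕ) : DecidablePred (simesGood d) := fun _ => Fintype.decidableForallFintype

lemma simes_mod_helper {d a r m : ℕ} (ha : a < d) (hr : r < d) (hm : m < d) :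
    (a + (d - r)) % d = m ↔ a = (r + m) % d := by
  constructor
  · intro h
    have h2 : (m + r) % d = a := by
      rw [← h, Nat.mod_add_mod, show a + (d - r) + r = a + d by omega,
        Nat.add_mod_right, Nat.mod_eq_of_lt ha]
    rw [Nat.add_comm r m]
    exact h2.symm
  · intro h
    subst h
    rw [Nat.mod_add_mod, show r + m + (d - r) = m + d by omega,
      Nat.add_mod_right, Nat.mod_eq_of_lt hm]

lemma simesShift_inj {d r : ℕ} (hr : r < d) : Function.Injective (simesShift d r) := by
  intro a b h
  unfold simesShift at h
  by_cases ha : (a : ℕ) < d <;> by_cases hb : (b : ℕ) < d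
  · rw [dif_pos ha, dif_pos hb] at h
    have h2 : ((a : ℕ) + (d - r)) % d = ((b : ℕ) + (d - r)) % d := by
      exact congrArg Fin.val h
    have hm : ((b : ℕ) + (d - r)) % d < d := Nat.mod_lt _ (by omega)
    have e1 := (simes_mod_helper ha hr hm).1 h2
    have e2 := (simes_mod_helper hb hr hm).1 rfl
    exact Fin.ext (e1.trans e2.symm)
  · rw [dif_pos ha, dif_neg hb] at h
    have : ((a : ℕ) + (d - r)) % d = (b : ℕ) := congrArg Fin.val h
    have hmlt : ((a : ℕ) + (d - r)) % d < d := Nat.mod_lt _ (by omega)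
    omega
  · rw [dif_neg ha, dif_pos hb] at h
    have : (a : ℕ) = ((b : ℕ) + (d - r)) % d := congrArg Fin.val h
    have hmlt : ((b : ℕ) + (d - r)) % d < d := Nat.mod_lt _ (by omega)
    omega
  · rw [dif_neg ha, dif_neg hb] at h
    exact h

lemma simes_rot_count (d : ℕ) (hd : 0 < d) (v : Fin d → Fin (d+1)) :
    ((range d).filter (fun r => simesGood d (fun j => simesShift d r (v j)))).card
      = d - (Finset.univ.filter (fun j => (v j : ℕ) < d)).card := by
  set s := (Finset.univ.filter (fun j => (v j : ℕ) < d)).card with hs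
  set c : ℕ → ℕ :=
    fun m => (Finset.univ.filter (fun j => (v j : ℕ) < d ∧ (v j : ℕ) = m % d)).card with hc
  have hsd : s ≤ d := by
    calc s ≤ (Finset.univ : Finset (Fin d)).card := Finset.card_filter_le _ _
    _ = d := by simp
  have hper : ∀ n, c (n + d) = c n := by
    intro n
    simp only [hc, Nat.add_mod_right]
  have hsum : ∑ m ∈ range d, c m = s := by
    rw [hs, Finset.card_eq_sum_card_fiberwise
      (f := fun j => (v j : ℕ)) (t := range d)
      (fun j hj => by
        rw [Finset.mem_coe, Finset.mem_filter] at hj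
        exact Finset.mem_range.2 hj.2)]
    apply Finset.sum_congr rfl
    intro m hm
    rw [Finset.mem_range] at hm
    show (Finset.univ.filter (fun j => (v j : ℕ) < d ∧ (v j : ℕ) = m % d)).card = _
    rw [Nat.mod_eq_of_lt hm, Finset.filter_filter]
  -- cardinality of the "≤ i" filter for the shifted vector
  have hcard : ∀ r, r < d → ∀ i, i < d →
      (Finset.univ.filter fun j => ((simesShift d r (v j)) : ℕ) ≤ i).card
        = ∑ m ∈ range (i+1), c (r + m) := by
    intro r hr i hi
    have hmaps : ∀ j ∈ (Finset.univ.filter fun j => ((simesShift d r (v j)) : ℕ) ≤ i),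
        ((v j : ℕ) + (d - r)) % d ∈ range (i+1) := by
      intro j hj
      rw [Finset.mem_filter] at hj
      obtain ⟨-, hj2⟩ := hj
      by_cases hvj : (v j : ℕ) < d
      · have he : ((simesShift d r (v j)) : ℕ) = ((v j : ℕ) + (d - r)) % d := by
          unfold simesShift
          rw [dif_pos hvj]
        rw [he] at hj2
        rw [Finset.mem_range]
        omega
      · exfalso
        have he : ((simesShift d r (v j)) : ℕ) = (v j : ℕ) := by
          unfold simesShift
          rw [dif_neg hvj]
        rw [he] at hj2
        omega
    rw [Finset.card_eq_sum_card_fiberwise hmaps]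
    apply Finset.sum_congr rfl
    intro m hm
    rw [Finset.mem_range] at hm
    have hmd : m < d := by omega
    show _ = (Finset.univ.filter (fun j => (v j : ℕ) < d ∧ (v j : ℕ) = (r + m) % d)).card
    congr 1
    ext j
    simp only [Finset.mem_filter, Finset.mem_univ, true_and]
    constructor
    · rintro ⟨h1, h2⟩
      have hvj : (v j : ℕ) < d := by
        by_contra hcon
        have he : ((simesShift d r (v j)) : ℕ) = (v j : ℕ) := by
          unfold simesShift
          rw [dif_neg hcon]
        rw [he] at h1
        omega
      exact ⟨hvj, (simes_mod_helper hvj hr hmd).1 h2⟩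
    · rintro ⟨h1, h2⟩
      have e := (simes_mod_helper h1 hr hmd).2 h2
      have hσ : ((simesShift d r (v j)) : ℕ) = ((v j : ℕ) + (d - r)) % d := by
        unfold simesShift
        rw [dif_pos h1]
      refine ⟨?_, e⟩
      rw [hσ, e]
      omega
  have hfc : (range d).filter (fun r => simesGood d (fun j => simesShift d r (v j)))
      = (range d).filter (fun r => ∀ i < d, (∑ m ∈ range (i+1), c (r + m)) ≤ i) := by
    apply Finset.filter_congr
    intro r hrm
    rw [Finset.mem_range] at hrm
    constructor
    · intro h i hi
      rw [← hcard r hrm i hi]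
      exact h ⟨i, hi⟩
    · intro h i
      have := h (i : ℕ) i.isLt
      rw [← hcard r hrm (i : ℕ) i.isLt] at this
      exact this
  rw [hfc]
  exact simes_cycle_count d s hd hsd c hper hsum

lemma simes_sum_identity (d : ℕ) (hd : 0 < d) (α : ℝ) :
    ∑ v ∈ Finset.univ.filter (simesGood d),
      ∏ j, (if (v j : ℕ) < d then α / d else 1 - α) = 1 - α := by
  set W : Fin (d+1) → ℝ := fun m => if (m : ℕ) < d then α / d else 1 - α with hWdef
  set T : ℝ := ∑ v ∈ Finset.univ.filter (simesGood d), ∏ j, W (v j) with hT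
  have hdR : (d : ℝ) ≠ 0 := Nat.cast_ne_zero.2 (by omega)
  -- total weight is 1
  have hW1 : ∑ m : Fin (d+1), W m = 1 := by
    rw [Fin.sum_univ_castSucc]
    have h1 : ∀ i : Fin d, W (Fin.castSucc i) = α / d := by
      intro i
      simp only [hWdef, Fin.coe_castSucc]
      rw [if_pos i.isLt]
    have h2 : W (Fin.last d) = 1 - α := by
      simp only [hWdef, Fin.val_last]
      rw [if_neg (lt_irrefl d)]
    rw [Finset.sum_congr rfl (fun i _ => h1 i), h2, Finset.sum_const, Finset.card_univ,
      Fintype.card_fin, nsmul_eq_mul]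
    field_simp
    ring
  -- W is shift-invariant
  have hWσ : ∀ r, ∀ m : Fin (d+1), W (simesShift d r m) = W m := by
    intro r m
    by_cases h : (m : ℕ) < d
    · have : simesShift d r m = ⟨((m : ℕ) + (d - r)) % d, Nat.lt_succ_of_lt (Nat.mod_lt _ (by omega))⟩ := by
        unfold simesShift
        rw [dif_pos h]
      rw [this]
      simp only [hWdef]
      rw [if_pos (Nat.mod_lt _ (by omega)), if_pos h]
    · have : simesShift d r m = m := by
        unfold simesShift
        rw [dif_neg h]
      rw [this]
  -- for each rotation, the shifted-good sum equals T
  have hstep1 : ∀ r ∈ range d,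
      ∑ v ∈ Finset.univ.filter (fun v : Fin d → Fin (d+1) => simesGood d (fun j => simesShift d r (v j))),
        ∏ j, W (v j) = T := by
    intro r hr
    rw [Finset.mem_range] at hr
    have hbij : Function.Bijective (simesShift d r) :=
      Finite.injective_iff_bijective.1 (simesShift_inj hr)
    set E : (Fin d → Fin (d+1)) ≃ (Fin d → Fin (d+1)) :=
      Equiv.arrowCongr (Equiv.refl (Fin d)) (Equiv.ofBijective _ hbij) with hE
    have hEv : ∀ v, E v = fun j => simesShift d r (v j) := fun v => rfl
    rw [hT]
    apply Finset.sum_equiv E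
    · intro v
      simp only [Finset.mem_filter, Finset.mem_univ, true_and, hEv]
    · intro v hv
      rw [hEv]
      exact (Finset.prod_congr rfl (fun j _ => (hWσ r (v j)).symm))
  -- double counting
  have hdc : (d : ℝ) * T = ∑ v : Fin d → Fin (d+1),
      (((range d).filter (fun r => simesGood d (fun j => simesShift d r (v j)))).card : ℝ)
        * ∏ j, W (v j) := by
    have lhs : ∑ r ∈ range d,
        (∑ v ∈ Finset.univ.filter (fun v : Fin d → Fin (d+1) => simesGood d (fun j => simesShift d r (v j))),
          ∏ j, W (v j)) = (d : ℝ) * T := by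
      rw [Finset.sum_congr rfl hstep1, Finset.sum_const, Finset.card_range, nsmul_eq_mul]
    rw [← lhs]
    have swap : ∀ r ∈ range d,
        (∑ v ∈ Finset.univ.filter (fun v : Fin d → Fin (d+1) => simesGood d (fun j => simesShift d r (v j))),
          ∏ j, W (v j))
        = ∑ v : Fin d → Fin (d+1),
            (if simesGood d (fun j => simesShift d r (v j)) then ∏ j, W (v j) else 0) := by
      intro r _
      rw [Finset.sum_filter]
    rw [Finset.sum_congr rfl swap, Finset.sum_comm]
    apply Finset.sum_congr rfl
    intro v _
    rw [← Finset.sum_filter, Finset.sum_const, nsmul_eq_mul]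
  -- compute the right side
  have hrc : ∀ v : Fin d → Fin (d+1),
      (((range d).filter (fun r => simesGood d (fun j => simesShift d r (v j)))).card : ℝ)
        = ∑ j : Fin d, (if (v j : ℕ) < d then (0:ℝ) else 1) := by
    intro v
    rw [simes_rot_count d hd v]
    have hle : (Finset.univ.filter (fun j => (v j : ℕ) < d)).card ≤ d := by
      calc _ ≤ (Finset.univ : Finset (Fin d)).card := Finset.card_filter_le _ _
      _ = d := by simp
    have hsplit := Finset.card_filter_add_card_filter_not
      (s := (Finset.univ : Finset (Fin d))) (fun j => (v j : ℕ) < d)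
    rw [Finset.card_univ, Fintype.card_fin] at hsplit
    have : d - (Finset.univ.filter (fun j => (v j : ℕ) < d)).card
        = (Finset.univ.filter (fun j => ¬ (v j : ℕ) < d)).card := by omega
    rw [this, Finset.card_filter]
    push_cast
    apply Finset.sum_congr rfl
    intro j _
    by_cases h : (v j : ℕ) < d <;> simp [h]
  -- the factorized sum
  have hfact : ∀ j : Fin d,
      ∑ v : Fin d → Fin (d+1), (if (v j : ℕ) < d then (0:ℝ) else 1) * ∏ l, W (v l)
        = 1 - α := by
    intro j
    set g : Fin d → Fin (d+1) → ℝ :=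
      fun l m => if l = j then (if (m : ℕ) < d then (0:ℝ) else W m) else W m with hg
    have hptwise : ∀ v : Fin d → Fin (d+1),
        (if (v j : ℕ) < d then (0:ℝ) else 1) * ∏ l, W (v l) = ∏ l, g l (v l) := by
      intro v
      by_cases h : (v j : ℕ) < d
      · rw [if_pos h, zero_mul]
        symm
        apply Finset.prod_eq_zero (Finset.mem_univ j)
        simp [hg, h]
      · rw [if_neg h, one_mul]
        apply Finset.prod_congr rfl
        intro l _
        by_cases hl : l = j
        · subst hl
          simp [hg, h]
        · simp [hg, hl]
    rw [Finset.sum_congr rfl (fun v _ => hptwise v), ← Fintype.prod_sum g]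
    have hcol : ∀ l : Fin d, (∑ m : Fin (d+1), g l m) = if l = j then 1 - α else 1 := by
      intro l
      by_cases hl : l = j
      · rw [if_pos hl]
        have : ∀ m : Fin (d+1), g l m = if (m : ℕ) < d then (0:ℝ) else W m := by
          intro m
          simp [hg, hl]
        rw [Finset.sum_congr rfl (fun m _ => this m)]
        rw [Fin.sum_univ_castSucc]
        have h1 : ∀ i : Fin d, (if ((Fin.castSucc i : Fin (d+1)) : ℕ) < d then (0:ℝ)
            else W (Fin.castSucc i)) = 0 := by
          intro i
          rw [if_pos]
          simp only [Fin.coe_castSucc]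
          exact i.isLt
        have h2 : (if ((Fin.last d : Fin (d+1)) : ℕ) < d then (0:ℝ) else W (Fin.last d))
            = 1 - α := by
          rw [if_neg]
          · simp only [hWdef, Fin.val_last]
            rw [if_neg (lt_irrefl d)]
          · simp
        rw [Finset.sum_congr rfl (fun i _ => h1 i), h2, Finset.sum_const]
        simp
      · rw [if_neg hl]
        have : ∀ m : Fin (d+1), g l m = W m := by
          intro m
          simp [hg, hl]
        rw [Finset.sum_congr rfl (fun m _ => this m)]
        exact hW1
    rw [Finset.prod_congr rfl (fun l _ => hcol l)]
    rw [Finset.prod_ite_eq' Finset.univ j (fun _ => (1 - α : ℝ))]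
    simp
  -- put it together
  have main : (d : ℝ) * T = (d : ℝ) * (1 - α) := by
    rw [hdc]
    have : ∀ v : Fin d → Fin (d+1),
        (((range d).filter (fun r => simesGood d (fun j => simesShift d r (v j)))).card : ℝ)
          * ∏ j, W (v j)
        = ∑ j : Fin d, (if (v j : ℕ) < d then (0:ℝ) else 1) * ∏ l, W (v l) := by
      intro v
      rw [hrc v, Finset.sum_mul]
    rw [Finset.sum_congr rfl (fun v _ => this v), Finset.sum_comm]
    rw [Finset.sum_congr rfl (fun j _ => hfact j), Finset.sum_const, Finset.card_univ,
      Fintype.card_fin, nsmul_eq_mul]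
  exact mul_left_cancel₀ hdR main
/-- Simes' identity under independence: for `d` i.i.d. uniform p-values on `(0,1)`,
the probability that every order statistic `p₍ᵢ₎` exceeds `i·α/d` equals `1 - α`.
The event `p₍ᵢ₎ > c` is expressed by counting: fewer than `i` of the p-values
are `≤ c`. -/
theorem simes_identity_indep
    {Ω : Type*} [MeasurableSpace Ω] (μ : Measure Ω) [IsProbabilityMeasure μ]
    (d : ℕ) (hd : 1 ≤ d) (p : Fin d → Ω → ℝ) (hmeas : ∀ i, Measurable (p i))
    (hindep : iIndepFun p μ)
    (hunif : ∀ i, ∀ x : ℝ,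
      μ {ω | p i ω ≤ x} = ENNReal.ofReal (min (max x 0) 1))
    (α : ℝ) (hα : α ∈ Set.Icc (0 : ℝ) 1) :
    μ {ω | ∀ i : Fin d,
        ((Finset.univ.filter fun j => p j ω ≤ ((i : ℕ) + 1) * α / d).card ≤ (i : ℕ))}
      = ENNReal.ofReal (1 - α) := by
  obtain ⟨hα0, hα1⟩ := hα
  have hd0 : 0 < d := hd
  have hdR : (0:ℝ) < d := by exact_mod_cast hd0
  set t : ℕ → ℝ := fun m => m * α / d with ht
  have tmono : ∀ a b : ℕ, a ≤ b → t a ≤ t b := by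
    intro a b hab
    simp only [ht]
    have hab' : (a:ℝ) ≤ b := by exact_mod_cast hab
    gcongr
  have hbounds : ∀ m, m ≤ d → 0 ≤ t m ∧ t m ≤ 1 := by
    intro m hm
    constructor
    · exact div_nonneg (mul_nonneg (Nat.cast_nonneg m) hα0) hdR.le
    · rw [div_le_one hdR]
      calc (m : ℝ) * α ≤ (m : ℝ) * 1 := by
            apply mul_le_mul_of_nonneg_left hα1 (Nat.cast_nonneg m)
      _ = m := mul_one _
      _ ≤ d := by exact_mod_cast hm
  set cl : ℝ → ℕ := fun x => ((Finset.range d).filter (fun m => t (m+1) < x)).card with hcl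
  have hcl_le : ∀ x, cl x ≤ d := fun x =>
    le_trans (Finset.card_filter_le _ _) (by simp)
  have hkey : ∀ (x : ℝ) (m : ℕ), m < d → (x ≤ t (m+1) ↔ cl x ≤ m) := by
    intro x m hm
    constructor
    · intro hx
      have hsub : (Finset.range d).filter (fun i => t (i+1) < x) ⊆ Finset.range m := by
        intro i hi
        rw [Finset.mem_filter, Finset.mem_range] at hi
        rw [Finset.mem_range]
        by_contra hcon
        push_neg at hcon
        have := tmono (m+1) (i+1) (by omega)
        linarith [hi.2]
      calc cl x ≤ (Finset.range m).card := Finset.card_le_card hsub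
      _ = m := Finset.card_range m
    · intro hx
      by_contra hcon
      push_neg at hcon
      have hsub : Finset.range (m+1) ⊆ (Finset.range d).filter (fun i => t (i+1) < x) := by
        intro i hi
        rw [Finset.mem_range] at hi
        rw [Finset.mem_filter, Finset.mem_range]
        exact ⟨by omega, lt_of_le_of_lt (tmono (i+1) (m+1) (by omega)) hcon⟩
      have := Finset.card_le_card hsub
      rw [Finset.card_range] at this
      have hceq : cl x = ((Finset.range d).filter (fun i => t (i+1) < x)).card := rfl
      omega
  set C : Fin (d+1) → Set ℝ := fun m =>
    if (m : ℕ) = 0 then Set.Iic (t 1)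
    else if (m : ℕ) < d then Set.Ioc (t (m : ℕ)) (t ((m : ℕ)+1))
    else Set.Ioi (t d) with hC
  have hCiff : ∀ (x : ℝ) (m : Fin (d+1)), x ∈ C m ↔ cl x = (m : ℕ) := by
    intro x m
    rcases Nat.lt_succ_iff_lt_or_eq.1 m.isLt with hmlt | hmeq
    · by_cases hm0 : (m : ℕ) = 0
      · simp only [hC, if_pos hm0, Set.mem_Iic]
        rw [hkey x 0 hd0, hm0]
        omega
      · simp only [hC, if_neg hm0, if_pos hmlt, Set.mem_Ioc]
        have e1 := hkey x (m : ℕ) hmlt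
        have e2 := hkey x ((m : ℕ) - 1) (by omega)
        rw [Nat.sub_add_cancel (by omega)] at e2
        constructor
        · rintro ⟨h1, h2⟩
          have := e1.1 h2
          have h3 : ¬ cl x ≤ (m : ℕ) - 1 := fun hle => absurd (e2.2 hle) (not_le.2 h1)
          omega
        · intro h
          refine ⟨?_, e1.2 (by omega)⟩
          by_contra hcon
          push_neg at hcon
          have := e2.1 hcon
          omega
    · simp only [hC, hmeq, if_neg (by omega : ¬ d = 0), if_neg (lt_irrefl d), Set.mem_Ioi]
      have e2 := hkey x (d - 1) (by omega)
      rw [Nat.sub_add_cancel (by omega)] at e2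
      have hle := hcl_le x
      constructor
      · intro h1
        have h3 : ¬ cl x ≤ d - 1 := fun hle2 => absurd (e2.2 hle2) (not_le.2 h1)
        omega
      · intro h
        by_contra hcon
        push_neg at hcon
        have := e2.1 hcon
        omega
  have hCmeas : ∀ m : Fin (d+1), MeasurableSet (C m) := by
    intro m
    simp only [hC]
    split_ifs
    · exact measurableSet_Iic
    · exact measurableSet_Ioc
    · exact measurableSet_Ioi
  -- measure of each preimage
  have hIic : ∀ (j : Fin d) (x : ℝ), μ (p j ⁻¹' Set.Iic x) = ENNReal.ofReal (min (max x 0) 1) :=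
    fun j x => hunif j x
  have hclamp : ∀ m, m ≤ d → min (max (t m) 0) 1 = t m := by
    intro m hm
    obtain ⟨h1, h2⟩ := hbounds m hm
    rw [max_eq_left h1, min_eq_left h2]
  have hμC : ∀ (j : Fin d) (m : Fin (d+1)),
      μ (p j ⁻¹' C m) = ENNReal.ofReal (if (m : ℕ) < d then α / d else 1 - α) := by
    intro j m
    rcases Nat.lt_succ_iff_lt_or_eq.1 m.isLt with hmlt | hmeq
    · rw [if_pos hmlt]
      by_cases hm0 : (m : ℕ) = 0
      · have hCeq : C m = Set.Iic (t 1) := by simp only [hC, if_pos hm0]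
        rw [hCeq, hIic j (t 1), hclamp 1 hd0]
        congr 1
        simp only [ht]
        push_cast
        ring
      · have hCeq : C m = Set.Ioc (t (m : ℕ)) (t ((m : ℕ)+1)) := by
          simp only [hC, if_neg hm0, if_pos hmlt]
        rw [hCeq]
        have hdiff : p j ⁻¹' Set.Ioc (t (m : ℕ)) (t ((m : ℕ)+1))
            = p j ⁻¹' Set.Iic (t ((m : ℕ)+1)) \ p j ⁻¹' Set.Iic (t (m : ℕ)) := by
          rw [← Set.preimage_diff, Set.Iic_sdiff_Iic]
        rw [hdiff, measure_diff
          (Set.preimage_mono (Set.Iic_subset_Iic.2 (tmono _ _ (by omega))))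
          ((hmeas j) measurableSet_Iic).nullMeasurableSet
          (measure_ne_top μ _)]
        rw [hIic j _, hIic j _, hclamp _ (by omega), hclamp _ (by omega)]
        rw [← ENNReal.ofReal_sub _ (hbounds (m : ℕ) (by omega)).1]
        congr 1
        simp only [ht]
        push_cast
        field_simp
        ring
    · rw [if_neg (by omega)]
      have hCeq : C m = Set.Ioi (t d) := by
        simp only [hC, hmeq, if_neg (by omega : ¬ d = 0), if_neg (lt_irrefl d)]
      have hcompl : p j ⁻¹' Set.Ioi (t d) = (p j ⁻¹' Set.Iic (t d))ᶜ := by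
        rw [← Set.preimage_compl, Set.compl_Iic]
      rw [hCeq, hcompl, prob_compl_eq_one_sub ((hmeas j) measurableSet_Iic)]
      rw [hIic j _, hclamp d le_rfl]
      have htd : t d = α := by
        simp only [ht]
        field_simp
      rw [htd, ← ENNReal.ofReal_one, ← ENNReal.ofReal_sub _ hα0]
  -- decompose the event
  have hset : {ω | ∀ i : Fin d,
      ((Finset.univ.filter fun j => p j ω ≤ ((i : ℕ) + 1) * α / d).card ≤ (i : ℕ))}
      = ⋃ v ∈ Finset.univ.filter (simesGood d), ⋂ j, p j ⁻¹' (C (v j)) := by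
    have hcast : ∀ (i : Fin d) (ω : Ω) (j : Fin d),
        (p j ω ≤ ((i : ℕ) + 1) * α / d) ↔ (cl (p j ω) ≤ (i : ℕ)) := by
      intro i ω j
      rw [← hkey (p j ω) (i : ℕ) i.isLt]
      have : t ((i : ℕ) + 1) = ((i : ℕ) + 1) * α / d := by
        simp only [ht]
        push_cast
        ring
      rw [this]
    ext ω
    simp only [Set.mem_setOf_eq, Set.mem_iUnion, Set.mem_iInter, Finset.mem_filter,
      Finset.mem_univ, true_and, Set.mem_preimage]
    constructor
    · intro h
      refine ⟨fun j => ⟨cl (p j ω), Nat.lt_succ_of_le (hcl_le _)⟩, ?_, ?_⟩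
      · intro i
        have hcards : (Finset.univ.filter fun j =>
            (((⟨cl (p j ω), Nat.lt_succ_of_le (hcl_le _)⟩ : Fin (d+1))) : ℕ) ≤ (i : ℕ)).card
            = (Finset.univ.filter fun j => p j ω ≤ ((i : ℕ) + 1) * α / d).card := by
          congr 1
          apply Finset.filter_congr
          intro j _
          simp only [eq_iff_iff]
          exact (hcast i ω j).symm
        rw [hcards]
        exact h i
      · intro j
        exact (hCiff _ _).2 rfl
    · rintro ⟨v, hgood, hmem⟩
      intro i
      have hveq : ∀ j, cl (p j ω) = (v j : ℕ) := fun j => (hCiff _ _).1 (hmem j)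
      have hcards : (Finset.univ.filter fun j => p j ω ≤ ((i : ℕ) + 1) * α / d).card
          = (Finset.univ.filter fun j => ((v j : ℕ)) ≤ (i : ℕ)).card := by
        congr 1
        apply Finset.filter_congr
        intro j _
        rw [hcast i ω j, hveq j]
      rw [hcards]
      exact hgood i
  rw [hset]
  rw [measure_biUnion_finset ?hdisj ?hm]
  case hdisj =>
    intro v hv v' hv' hne
    rw [Function.onFun]
    apply Set.disjoint_left.2
    intro ω hω hω'
    apply hne
    funext j
    apply Fin.ext
    have e1 := (hCiff (p j ω) (v j)).1 (Set.mem_iInter.1 hω j)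
    have e2 := (hCiff (p j ω) (v' j)).1 (Set.mem_iInter.1 hω' j)
    rw [← e1, ← e2]
  case hm =>
    intro v hv
    exact MeasurableSet.iInter (fun j => (hmeas j) (hCmeas (v j)))
  have hprod : ∀ v : Fin d → Fin (d+1),
      μ (⋂ j, p j ⁻¹' C (v j)) = ∏ j, μ (p j ⁻¹' C (v j)) := by
    intro v
    exact hindep.meas_iInter (fun i => ⟨C (v i), hCmeas (v i), rfl⟩)
  have hterm : ∀ v ∈ Finset.univ.filter (simesGood d),
      μ (⋂ j, p j ⁻¹' C (v j))
        = ENNReal.ofReal (∏ j, (if (v j : ℕ) < d then α / d else 1 - α)) := by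
    intro v _
    rw [hprod v, Finset.prod_congr rfl (fun j _ => hμC j (v j)),
      ← ENNReal.ofReal_prod_of_nonneg]
    intro j _
    split_ifs
    · positivity
    · linarith

  have hWnn : ∀ m : Fin (d+1), (0:ℝ) ≤ (if (m : ℕ) < d then α / d else 1 - α) := by
    intro m
    split_ifs
    · positivity
    · linarith
  rw [Finset.sum_congr rfl hterm, ← ENNReal.ofReal_sum_of_nonneg
    (fun v _ => Finset.prod_nonneg (fun j _ => hWnn (v j)))]
  rw [simes_sum_identity d hd0 α]
end

section
/- FWER control of Holm's procedure: Let p₁,…,p_d be p-values and let T ⊆ {1,…,d} be the index set of true hypotheses with |T| = t ≥ 1, where P(pᵢ ≤ u) ≤ u for each i ∈ T and all u ∈ [0,1]. Then the probability that Holm's step-down procedure (thresholds α/(d−j+1) on ordered p-values, stopping at first failure) rejects at least one true hypothesis is at most α. -/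
open MeasureTheory Real Finset

/-- FWER control of Holm's step-down procedure. Holm's procedure is the closed
testing procedure based on Bonferroni local tests: hypothesis `i` is rejected
iff every subset `I` containing `i` has some p-value `≤ α/|I|`. If the
p-values of the true hypotheses `T` (with `|T| ≥ 1`) are superuniform, the
probability of rejecting at least one true hypothesis is at most `α`. -/
theorem holm_fwer_control
    {Ω : Type*} [MeasurableSpace Ω] (μ : Measure Ω) [IsProbabilityMeasure μ]
    (d : ℕ) (p : Fin d → Ω → ℝ)
    (T : Finset (Fin d)) (hT : T.Nonempty)
    (hsuper : ∀ i ∈ T, ∀ u ∈ Set.Icc (0 : ℝ) 1,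
      μ {ω | p i ω ≤ u} ≤ ENNReal.ofReal u)
    (α : ℝ) (hα : α ∈ Set.Icc (0 : ℝ) 1) :
    μ {ω | ∃ i ∈ T, ∀ I : Finset (Fin d), i ∈ I →
        ∃ j ∈ I, p j ω ≤ α / I.card} ≤ ENNReal.ofReal α := by
  set t : ℕ := T.card with htdef
  have ht : 0 < t := Finset.card_pos.mpr hT
  have htR : (0:ℝ) < t := Nat.cast_pos.mpr ht
  -- event is contained in union over T of {p j ≤ α/t}
  have hsub : {ω | ∃ i ∈ T, ∀ I : Finset (Fin d), i ∈ I →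
      ∃ j ∈ I, p j ω ≤ α / I.card} ⊆ ⋃ j ∈ T, {ω | p j ω ≤ α / t} := by
    intro ω hω
    obtain ⟨i, hi, h⟩ := hω
    obtain ⟨j, hj, hle⟩ := h T hi
    exact Set.mem_biUnion hj hle
  have hmem : α / t ∈ Set.Icc (0:ℝ) 1 := by
    constructor
    · exact div_nonneg hα.1 htR.le
    · calc α / t ≤ α / 1 := by
            apply div_le_div_of_nonneg_left hα.1 one_pos
            · exact_mod_cast ht
      _ = α := div_one α
      _ ≤ 1 := hα.2
  calc μ _ ≤ μ (⋃ j ∈ T, {ω | p j ω ≤ α / t}) := measure_mono hsub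
    _ ≤ ∑ j ∈ T, μ {ω | p j ω ≤ α / t} := measure_biUnion_finset_le T _
    _ ≤ ∑ j ∈ T, ENNReal.ofReal (α / t) := by
        exact Finset.sum_le_sum fun j hj => hsuper j hj _ hmem
    _ = t * ENNReal.ofReal (α / t) := by
        rw [Finset.sum_const, nsmul_eq_mul]
    _ = ENNReal.ofReal (t * (α / t)) := by
        rw [ENNReal.ofReal_mul (by positivity)]
        simp
    _ = ENNReal.ofReal α := by rw [mul_div_cancel₀ _ htR.ne']
end

section
/- Sequential rejection principle (fixed-threshold case): Suppose for each subset R of hypotheses a successor set N(R) is defined, satisfying monotonicity (R ⊆ R' implies N(R) ⊆ N(R') ∪ R') almost surely, and the single-step condition: on the event that no false rejection has yet occurred, P(N(F) ⊆ F) ≥ 1 − α where F is the set of false hypotheses. Then the final rejection set R^(∞) obtained by iterating R^(s+1) = R^(s) ∪ N(R^(s)) from R^(0) = ∅ satisfies P(R^(∞) ⊆ F) ≥ 1 − α. -/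
open MeasureTheory

/-- The iteration of the sequential rejection procedure:
`R⁽⁰⁾ = ∅` and `R⁽ˢ⁺¹⁾ = R⁽ˢ⁾ ∪ N(R⁽ˢ⁾)`. -/
def seqRejIter {Ω H : Type*} [DecidableEq H]
    (N : Finset H → Ω → Finset H) : ℕ → Ω → Finset H
  | 0 => fun _ => ∅
  | s + 1 => fun ω => seqRejIter N s ω ∪ N (seqRejIter N s ω) ω

/-- Goeman–Solari sequential rejection principle (fixed-threshold case): if the
successor function `N` is monotone (`R ⊆ R'` implies `N(R) ⊆ N(R') ∪ R'`,
almost surely, here pointwise) and satisfies the single-step condition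
`P(N(F) ⊆ F) ≥ 1 − α` for the set `F` of false hypotheses, then the final
rejection set (after `|H|` iterations the procedure has stabilized) satisfies
`P(R⁽^∞⁾ ⊆ F) ≥ 1 − α`. -/
theorem sequential_rejection_principle
    {Ω H : Type*} [MeasurableSpace Ω] [Fintype H] [DecidableEq H]
    (μ : Measure Ω) [IsProbabilityMeasure μ]
    (N : Finset H → Ω → Finset H) (F : Finset H)
    (α : ℝ) (hα : α ∈ Set.Icc (0 : ℝ) 1)
    (hmono : ∀ ω, ∀ R R' : Finset H, R ⊆ R' → N R ω ⊆ N R' ω ∪ R')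
    (hsingle : ENNReal.ofReal (1 - α) ≤ μ {ω | N F ω ⊆ F}) :
    ENNReal.ofReal (1 - α) ≤ μ {ω | seqRejIter N (Fintype.card H) ω ⊆ F} := by
  refine hsingle.trans (measure_mono ?_)
  intro ω (hω : N F ω ⊆ F)
  show seqRejIter N (Fintype.card H) ω ⊆ F
  induction Fintype.card H with
  | zero => simp [seqRejIter]
  | succ s ih =>
    simp only [seqRejIter, Finset.union_subset_iff]
    refine ⟨ih, ?_⟩
    refine (hmono ω _ F ih).trans ?_
    exact Finset.union_subset hω (le_refl F)
end
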